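/- For a random walk on a connected simple graph G with n vertices in which every vertex has degree at most k, the hitting time satisfies H(x,y) ≤ k(n-1)^2 for all vertices x, y. -/

import Mathlib

open Finset

section aux
variable {V : Type*} [Fintype V] [DecidableEq V] (G : SimpleGraph V) [DecidableRel G.Adj] {y : V}
  {f : V → ℝ}

lemma aux_deg_pos (hG : G.Connected) {x y : V} (hxy : x ≠ y) : 0 < G.degree x := by
  rw [SimpleGraph.degree_pos_iff_exists_adj]
  obtain ⟨p⟩ := hG.preconnected x y
  exact ⟨_, p.adj_snd (SimpleGraph.Walk.not_nil_of_ne hxy)⟩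

lemma aux_div (hG : G.Connected)
    (hfx : ∀ x, x ≠ y → f x = 1 + (∑ z ∈ G.neighborFinset x, f z) / (G.degree x))
    {x : V} (hx : x ≠ y) :
    ∑ z ∈ G.neighborFinset x, (f x - f z) = G.degree x := by
  have hd : (0:ℝ) < G.degree x := by exact_mod_cast aux_deg_pos G hG hx
  have h := hfx x hx
  have h2 : (∑ z ∈ G.neighborFinset x, f z) = (f x - 1) * G.degree x := by
    field_simp at h; linarith
  rw [Finset.sum_sub_distrib, Finset.sum_const, SimpleGraph.card_neighborFinset_eq_degree,
    nsmul_eq_mul, h2]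
  ring

lemma aux_nonneg (hG : G.Connected) (hf0 : f y = 0)
    (hfx : ∀ x, x ≠ y → f x = 1 + (∑ z ∈ G.neighborFinset x, f z) / (G.degree x)) (x : V) :
    0 ≤ f x := by
  obtain ⟨m, -, hm⟩ := Finset.exists_min_image Finset.univ f ⟨y, Finset.mem_univ y⟩
  have hmx : f m ≤ f x := hm x (Finset.mem_univ x)
  by_cases hmy : m = y
  · rw [hmy, hf0] at hmx; exact hmx
  · exfalso
    have hd : (0:ℝ) < G.degree m := by exact_mod_cast aux_deg_pos G hG hmy
    have hs : (G.degree m : ℝ) * f m ≤ ∑ z ∈ G.neighborFinset m, f z := by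
      calc (G.degree m : ℝ) * f m = ∑ _z ∈ G.neighborFinset m, f m := by
            rw [Finset.sum_const, SimpleGraph.card_neighborFinset_eq_degree, nsmul_eq_mul]
        _ ≤ _ := Finset.sum_le_sum fun z _ => hm z (Finset.mem_univ z)
    have : f m ≤ (∑ z ∈ G.neighborFinset m, f z) / (G.degree m) :=
      (le_div_iff₀ hd).2 (by linarith [hs])
    have := hfx m hmy
    linarith

lemma aux_cancel (S : Finset V) :
    ∑ x ∈ S, ∑ z ∈ S.filter (G.Adj x), (f x - f z) = 0 := by
  have hcomm : ∑ x ∈ S, ∑ z ∈ S.filter (G.Adj x), f z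
      = ∑ z ∈ S, ∑ x ∈ S.filter (G.Adj z), f z := by
    refine Finset.sum_comm' ?_
    intro a b
    simp only [Finset.mem_filter]
    constructor
    · rintro ⟨ha, hb, hab⟩; exact ⟨⟨ha, hab.symm⟩, hb⟩
    · rintro ⟨⟨ha, hab⟩, hb⟩; exact ⟨ha, hb, hab.symm⟩
  simp only [Finset.sum_sub_distrib]
  rw [hcomm, sub_self]

lemma aux_cut (hG : G.Connected)
    (hfx : ∀ x, x ≠ y → f x = 1 + (∑ z ∈ G.neighborFinset x, f z) / (G.degree x))
    (S : Finset V) (hyS : y ∉ S) :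
    ∑ x ∈ S, (G.degree x : ℝ) = ∑ x ∈ S, ∑ z ∈ G.neighborFinset x \ S, (f x - f z) := by
  have key : ∀ x ∈ S, (G.degree x : ℝ)
      = ∑ z ∈ S.filter (G.Adj x), (f x - f z) + ∑ z ∈ G.neighborFinset x \ S, (f x - f z) := by
    intro x hx
    have hx' : x ≠ y := fun h => hyS (h ▸ hx)
    rw [← aux_div G hG hfx hx']
    rw [← Finset.sum_filter_add_sum_filter_not (G.neighborFinset x) (· ∈ S)]
    congr 1
    · apply Finset.sum_congr _ (fun _ _ => rfl)
      ext z
      simp only [Finset.mem_filter, SimpleGraph.mem_neighborFinset]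
      tauto
    · rw [Finset.sdiff_eq_filter]
  rw [Finset.sum_congr rfl key, Finset.sum_add_distrib, aux_cancel, zero_add]

end aux

/-- `H` is the vector of expected hitting times of the simple random walk on `G`:
`H y y = 0` and for `x ≠ y`, `H x y = 1 + (average of H z y over neighbors z of x)`. -/
def IsHittingTime {V : Type*} [Fintype V] (G : SimpleGraph V) [DecidableRel G.Adj]
    (H : V → V → ℝ) : Prop :=
  (∀ y, H y y = 0) ∧
  ∀ x y, x ≠ y → H x y = 1 + (∑ z ∈ G.neighborFinset x, H z y) / (G.degree x)

theorem hitting_time_le_of_maxDegree {V : Type*} [Fintype V] (G : SimpleGraph V)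
    [DecidableRel G.Adj] (hG : G.Connected) (k : ℕ) (hk : ∀ v, G.degree v ≤ k)
    (H : V → V → ℝ) (hH : IsHittingTime G H) (x y : V) :
    H x y ≤ (k : ℝ) * ((Fintype.card V : ℝ) - 1) ^ 2 := by
  classical
  set f : V → ℝ := fun v => H v y with hf
  have hf0 : f y = 0 := hH.1 y
  have hfx : ∀ v, v ≠ y → f v = 1 + (∑ z ∈ G.neighborFinset v, f z) / (G.degree v) :=
    fun v hv => hH.2 v y hv
  have hnn : ∀ v, 0 ≤ f v := aux_nonneg G hG hf0 hfx
  have hcard : 1 ≤ Fintype.card V := Fintype.card_pos_iff.2 ⟨y⟩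
  set n : ℕ := Fintype.card V with hn
  set K : ℝ := (k : ℝ) * ((n : ℝ) - 1) with hK
  have hK0 : 0 ≤ K := by
    apply mul_nonneg (Nat.cast_nonneg k)
    have : (1:ℝ) ≤ (n:ℝ) := by exact_mod_cast hcard
    linarith
  -- main induction
  have main : ∀ c : ℕ, ∀ v : V, (Finset.univ.filter (fun u => f u < f v)).card ≤ c →
      f v ≤ K * c := by
    intro c
    induction c with
    | zero =>
      intro v hv
      have hemp : Finset.univ.filter (fun u => f u < f v) = ∅ :=
        Finset.card_eq_zero.1 (Nat.le_zero.1 hv)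
      have hny : ¬ f y < f v := by
        intro h
        have : y ∈ Finset.univ.filter (fun u => f u < f v) := by
          simp only [Finset.mem_filter, Finset.mem_univ, true_and]; exact h
        rw [hemp] at this
        exact absurd this (Finset.notMem_empty y)
      push_neg at hny
      rw [hf0] at hny
      calc f v ≤ 0 := hny
        _ = K * (0:ℕ) := by simp
    | succ c ih =>
      intro v hv
      by_cases hv0 : f v ≤ 0
      · calc f v ≤ 0 := hv0
          _ ≤ K * ((c:ℕ)+1 : ℕ) := by positivity
      push_neg at hv0
      set S : Finset V := Finset.univ.filter (fun u => f v ≤ f u) with hS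
      have hyS : y ∉ S := by
        simp only [hS, Finset.mem_filter]
        rintro ⟨-, h⟩; rw [hf0] at h; linarith
      have hvS : v ∈ S := by simp [hS]
      have hScard : (S.card : ℝ) ≤ (n : ℝ) - 1 := by
        have : S.card < n := by
          rw [hn, ← Finset.card_univ]
          refine Finset.card_lt_card (Finset.ssubset_univ_iff.2 ?_)
          intro h
          rw [h] at hyS
          exact hyS (Finset.mem_univ y)
        have : S.card ≤ n - 1 := Nat.le_sub_one_of_lt this
        calc (S.card : ℝ) ≤ ((n - 1 : ℕ) : ℝ) := by exact_mod_cast this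
          _ = (n : ℝ) - 1 := by push_cast [hcard]; ring
      -- crossing terms are nonnegative
      have hterm_nn : ∀ a ∈ S, ∀ b ∈ G.neighborFinset a \ S, 0 ≤ f a - f b := by
        intro a ha b hb
        rw [Finset.mem_sdiff] at hb
        have h1 : f v ≤ f a := (Finset.mem_filter.1 ha).2
        have h2 : ¬ f v ≤ f b := fun h => hb.2 (by simp [hS, h])
        push_neg at h2
        linarith
      have hcut := aux_cut G hG hfx S hyS
      have htot_ub : ∑ a ∈ S, (G.degree a : ℝ) ≤ K := by
        calc ∑ a ∈ S, (G.degree a : ℝ) ≤ ∑ _a ∈ S, (k : ℝ) :=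
              Finset.sum_le_sum fun a _ => by exact_mod_cast hk a
          _ = S.card * k := by rw [Finset.sum_const, nsmul_eq_mul]
          _ ≤ ((n:ℝ) - 1) * k := by
              apply mul_le_mul_of_nonneg_right hScard (Nat.cast_nonneg k)
          _ = K := by rw [hK]; ring
      have htot_lb : (1:ℝ) ≤ ∑ a ∈ S, (G.degree a : ℝ) := by
        have hvy : v ≠ y := by intro h; rw [h] at hvS; exact hyS hvS
        calc (1:ℝ) ≤ (G.degree v : ℝ) := by exact_mod_cast aux_deg_pos G hG hvy
          _ ≤ ∑ a ∈ S, (G.degree a : ℝ) :=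
              Finset.single_le_sum (f := fun a => (G.degree a : ℝ))
                (fun a _ => by positivity) hvS
      -- there is a crossing pair
      have hexists : ∃ a ∈ S, ∃ b ∈ G.neighborFinset a \ S, True := by
        by_contra hc
        push_neg at hc
        have : ∀ a ∈ S, G.neighborFinset a \ S = ∅ := by
          intro a ha
          rw [Finset.eq_empty_iff_forall_notMem]
          intro b hb
          exact hc a ha b hb
        have : ∑ a ∈ S, ∑ z ∈ G.neighborFinset a \ S, (f a - f z) = 0 :=
          Finset.sum_eq_zero fun a ha => by rw [this a ha, Finset.sum_empty]
        rw [this] at hcut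
        linarith
      obtain ⟨a, ha, b, hb, -⟩ := hexists
      -- the single crossing term is at most the total
      have hsingle : f a - f b ≤ K := by
        have h1 : f a - f b ≤ ∑ z ∈ G.neighborFinset a \ S, (f a - f z) :=
          Finset.single_le_sum (fun z hz => hterm_nn a ha z hz) hb
        have h2 : ∑ z ∈ G.neighborFinset a \ S, (f a - f z)
            ≤ ∑ x ∈ S, ∑ z ∈ G.neighborFinset x \ S, (f x - f z) :=
          Finset.single_le_sum (f := fun x => ∑ z ∈ G.neighborFinset x \ S, (f x - f z))
            (fun x hx => Finset.sum_nonneg fun z hz => hterm_nn x hx z hz) ha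
        linarith [hcut, htot_ub, h1, h2]
      have hbS : b ∉ S := (Finset.mem_sdiff.1 hb).2
      have hfb : f b < f v := by
        by_contra h
        exact hbS (by simp [hS, le_of_not_gt h])
      have haf : f v ≤ f a := (Finset.mem_filter.1 ha).2
      -- take the maximizer w of f over the strict sublevel set
      set T : Finset V := Finset.univ.filter (fun u => f u < f v) with hT
      have hbT : b ∈ T := by simp [hT, hfb]
      obtain ⟨w, hwT, hw⟩ := Finset.exists_max_image T f ⟨b, hbT⟩
      have hwv : f w < f v := (Finset.mem_filter.1 hwT).2
      have hwb : f b ≤ f w := hw b hbT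
      have hT' : (Finset.univ.filter (fun u => f u < f w)).card ≤ c := by
        have hsub : Finset.univ.filter (fun u => f u < f w) ⊆ T.erase w := by
          intro u hu
          rw [Finset.mem_filter] at hu
          rw [Finset.mem_erase]
          refine ⟨fun h => by rw [h] at hu; linarith [hu.2], ?_⟩
          simp only [hT, Finset.mem_filter, Finset.mem_univ, true_and]
          linarith [hu.2, hwv]
        calc (Finset.univ.filter (fun u => f u < f w)).card ≤ (T.erase w).card :=
              Finset.card_le_card hsub
          _ = T.card - 1 := Finset.card_erase_of_mem hwT
          _ ≤ (c + 1) - 1 := Nat.sub_le_sub_right hv 1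
          _ = c := rfl
      have hIH := ih w hT'
      have : f v ≤ f w + K := by linarith
      calc f v ≤ f w + K := this
        _ ≤ K * c + K := by linarith
        _ = K * ((c:ℕ) + 1 : ℕ) := by push_cast; ring
  -- conclude
  have hxfilter : (Finset.univ.filter (fun u => f u < f x)).card ≤ n - 1 := by
    have hsub : Finset.univ.filter (fun u => f u < f x) ⊆ Finset.univ.erase x := by
      intro u hu
      rw [Finset.mem_filter] at hu
      rw [Finset.mem_erase]
      exact ⟨fun h => by rw [h] at hu; exact lt_irrefl _ hu.2, Finset.mem_univ u⟩
    calc _ ≤ (Finset.univ.erase x).card := Finset.card_le_card hsub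
      _ = n - 1 := by rw [Finset.card_erase_of_mem (Finset.mem_univ x), Finset.card_univ]
  have := main (n - 1) x hxfilter
  calc H x y = f x := rfl
    _ ≤ K * ((n - 1 : ℕ) : ℝ) := this
    _ = (k : ℝ) * ((n : ℝ) - 1) ^ 2 := by
        rw [hK]
        have : ((n - 1 : ℕ) : ℝ) = (n : ℝ) - 1 := by push_cast [hcard]; ring
        rw [this]; ring
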